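/- arXiv:2501.18721 — 2 statements merged into one kernel-verified Lean document; each statement's English description precedes it below -/
import Mathlib

section
/- For α = 2 and σ > 0, the function U_b(t,x) = x·(1 − 2Φ(−1/(σx√t))), where Φ is the standard normal cumulative distribution function, satisfies the PDE U_t = (1/2)σ²x⁴U_{xx} for all t > 0 and x > 0. -/
open Real Set MeasureTheory

noncomputable def stdNormalCDF (z : ℝ) : ℝ :=
  (1 / Real.sqrt (2 * Real.pi)) * ∫ s in Set.Iic z, Real.exp (-s^2 / 2)

lemma integrable_gauss : Integrable (fun s : ℝ => Real.exp (-s^2 / 2)) := by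
  have h := integrable_exp_neg_mul_sq (by norm_num : (0:ℝ) < 1/2)
  convert h using 2 with s
  ring_nf

lemma hasDerivAt_stdNormalCDF (z : ℝ) :
    HasDerivAt stdNormalCDF ((1 / Real.sqrt (2 * Real.pi)) * Real.exp (-z^2 / 2)) z := by
  have hint := integrable_gauss
  have key : ∀ w : ℝ, stdNormalCDF w
      = (1 / Real.sqrt (2 * Real.pi)) *
        ((∫ s in Set.Iic (0:ℝ), Real.exp (-s^2 / 2)) + ∫ s in (0:ℝ)..w, Real.exp (-s^2 / 2)) := by
    intro w
    unfold stdNormalCDF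
    congr 1
    rw [← intervalIntegral.integral_Iic_sub_Iic (hint.integrableOn) (hint.integrableOn)]
    ring
  have hmain : HasDerivAt (fun w => ∫ s in (0:ℝ)..w, Real.exp (-s^2 / 2))
      (Real.exp (-z^2 / 2)) z := by
    exact intervalIntegral.integral_hasDerivAt_right hint.intervalIntegrable
      hint.aestronglyMeasurable.stronglyMeasurableAtFilter
      (Real.continuous_exp.comp (by continuity)).continuousAt
  have h2 := ((hmain.const_add (∫ s in Set.Iic (0:ℝ), Real.exp (-s^2 / 2))).const_mul
      (1 / Real.sqrt (2 * Real.pi)))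
  have heq : stdNormalCDF = fun w => (1 / Real.sqrt (2 * Real.pi)) *
        ((∫ s in Set.Iic (0:ℝ), Real.exp (-s^2 / 2)) + ∫ s in (0:ℝ)..w, Real.exp (-s^2 / 2)) :=
    funext key
  rw [heq]
  convert h2 using 1

theorem bubble_solution_satisfies_pde
    (σ : ℝ) (hσ : 0 < σ)
    (U : ℝ → ℝ → ℝ)
    (hU : ∀ t x, U t x = x * (1 - 2 * stdNormalCDF (-(1 / (σ * x * Real.sqrt t))))) :
    ∀ t : ℝ, 0 < t → ∀ x : ℝ, 0 < x →
      deriv (fun τ => U τ x) t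
        = (1/2) * σ^2 * x^4 * deriv (deriv (fun ξ => U t ξ)) x := by
  intro t ht x hx
  have hrt : (0:ℝ) < Real.sqrt t := Real.sqrt_pos.mpr ht
  have hP : Real.sqrt (2 * Real.pi) ≠ 0 := by positivity
  -- time derivative
  have h1 : HasDerivAt Real.sqrt (1/(2*Real.sqrt t)) t := Real.hasDerivAt_sqrt ht.ne'
  have h2 : HasDerivAt (fun τ => σ * x * Real.sqrt τ) ((σ*x) * (1/(2*Real.sqrt t))) t :=
    h1.const_mul (σ * x)
  have hne : σ * x * Real.sqrt t ≠ 0 := by positivity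
  have h4' : HasDerivAt (fun τ => -(1 / (σ * x * Real.sqrt τ)))
      (-(-((σ*x) * (1/(2*Real.sqrt t))) / (σ * x * Real.sqrt t)^2)) t := by
    simpa only [one_div] using (h2.fun_inv hne).fun_neg
  have h5 := (hasDerivAt_stdNormalCDF (-(1 / (σ * x * Real.sqrt t)))).comp t h4'
  have hfun : (fun τ => U τ x)
      = fun τ => x * (1 - 2 * stdNormalCDF (-(1 / (σ * x * Real.sqrt τ)))) :=
    funext fun τ => hU τ x
  have h6 : HasDerivAt (fun τ => U τ x)
      (x * -(2 * ((1 / Real.sqrt (2 * Real.pi) *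
          Real.exp (-(-(1 / (σ * x * Real.sqrt t)))^2 / 2)) *
        (-(-((σ*x) * (1/(2*Real.sqrt t))) / (σ * x * Real.sqrt t)^2))))) t := by
    rw [hfun]
    exact ((h5.const_mul 2).const_sub 1).const_mul x
  rw [h6.deriv]
  -- spatial first derivative
  set F : ℝ → ℝ := fun y =>
    (1 - 2 * stdNormalCDF (-(1 / (σ * y * Real.sqrt t))))
      - 2 * Real.exp (-(1 / (σ * y * Real.sqrt t))^2 / 2)
          / (Real.sqrt (2 * Real.pi) * (σ * y * Real.sqrt t)) with hFdef
  have hF : ∀ y : ℝ, 0 < y → HasDerivAt (fun ξ => U t ξ) (F y) y := by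
    intro y hy
    have hg1 : HasDerivAt (fun ξ => σ * ξ * Real.sqrt t) (σ * 1 * Real.sqrt t) y :=
      ((hasDerivAt_id y).const_mul σ).mul_const (Real.sqrt t)
    have hgne : σ * y * Real.sqrt t ≠ 0 := by positivity
    have hg2' : HasDerivAt (fun ξ => -(1 / (σ * ξ * Real.sqrt t)))
        (-(-(σ * 1 * Real.sqrt t) / (σ * y * Real.sqrt t)^2)) y := by
      simpa only [one_div] using (hg1.fun_inv hgne).fun_neg
    have hΦ := (hasDerivAt_stdNormalCDF (-(1 / (σ * y * Real.sqrt t)))).comp y hg2'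
    have hmulU : HasDerivAt (fun ξ => ξ * (1 - 2 * stdNormalCDF (-(1 / (σ * ξ * Real.sqrt t)))))
        (1 * (1 - 2 * stdNormalCDF (-(1 / (σ * y * Real.sqrt t))))
          + y * -(2 * ((1 / Real.sqrt (2 * Real.pi) *
              Real.exp (-(-(1 / (σ * y * Real.sqrt t)))^2 / 2)) *
            (-(-(σ * 1 * Real.sqrt t) / (σ * y * Real.sqrt t)^2))))) y :=
      (hasDerivAt_id y).mul ((hΦ.const_mul 2).const_sub 1)
    have hfun2 : (fun ξ => U t ξ)
        = fun ξ => ξ * (1 - 2 * stdNormalCDF (-(1 / (σ * ξ * Real.sqrt t)))) :=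
      funext fun ξ => hU t ξ
    rw [hfun2]
    convert hmulU using 1
    rw [hFdef]
    rw [show (-(1 / (σ * y * Real.sqrt t)))^2 = (1 / (σ * y * Real.sqrt t))^2 from by ring]
    field_simp
    ring
  have hev : deriv (fun ξ => U t ξ) =ᶠ[nhds x] F := by
    filter_upwards [eventually_gt_nhds hx] with y hy
    exact (hF y hy).deriv
  rw [Filter.EventuallyEq.deriv_eq hev]
  -- second spatial derivative: derivative of F at x
  have hg1 : HasDerivAt (fun ξ => σ * ξ * Real.sqrt t) (σ * 1 * Real.sqrt t) x :=
    ((hasDerivAt_id x).const_mul σ).mul_const (Real.sqrt t)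
  have hg2' : HasDerivAt (fun ξ => -(1 / (σ * ξ * Real.sqrt t)))
      (-(-(σ * 1 * Real.sqrt t) / (σ * x * Real.sqrt t)^2)) x := by
    simpa only [one_div] using (hg1.fun_inv hne).fun_neg
  have hΦ := (hasDerivAt_stdNormalCDF (-(1 / (σ * x * Real.sqrt t)))).comp x hg2'
  have hpart1 : HasDerivAt (fun ξ => 1 - 2 * stdNormalCDF (-(1 / (σ * ξ * Real.sqrt t))))
      (-(2 * ((1 / Real.sqrt (2 * Real.pi) *
          Real.exp (-(-(1 / (σ * x * Real.sqrt t)))^2 / 2)) *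
        (-(-(σ * 1 * Real.sqrt t) / (σ * x * Real.sqrt t)^2))))) x :=
    (hΦ.const_mul 2).const_sub 1
  have hu : HasDerivAt (fun ξ => 1 / (σ * ξ * Real.sqrt t))
      (-(σ * 1 * Real.sqrt t) / (σ * x * Real.sqrt t)^2) x := by
    simpa only [one_div] using hg1.fun_inv hne
  have hw : HasDerivAt (fun ξ => -(1 / (σ * ξ * Real.sqrt t))^2 / 2)
      ((-(2 * (1 / (σ * x * Real.sqrt t))^1 *
        (-(σ * 1 * Real.sqrt t) / (σ * x * Real.sqrt t)^2))) / 2) x :=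
    ((hu.pow 2).neg).div_const 2
  have hexp := hw.exp
  have hnum := hexp.const_mul 2
  have hden : HasDerivAt (fun ξ => Real.sqrt (2 * Real.pi) * (σ * ξ * Real.sqrt t))
      (Real.sqrt (2 * Real.pi) * (σ * 1 * Real.sqrt t)) x := hg1.const_mul _
  have hdenne : Real.sqrt (2 * Real.pi) * (σ * x * Real.sqrt t) ≠ 0 := by positivity
  have hfrac := hnum.fun_div hden hdenne
  have hFderiv := hpart1.fun_sub hfrac
  rw [hFdef]
  rw [hFderiv.deriv]
  rw [show (-(1 / (σ * x * Real.sqrt t)))^2 = (1 / (σ * x * Real.sqrt t))^2 from by ring]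
  field_simp
  ring
end

section
/- If c < a (both a > 0), then for the function u(t,y) = t^{c/a−2}·exp(−y/(at)) and any fixed y₀ > 0, the integral ∫₀^{y₀} u(t,z) dz tends to +∞ as t → 0⁺. -/
open Real Set Filter Topology

theorem feller_solution_nonintegrable_singularity
    (a c : ℝ) (ha : 0 < a) (hc : c < a)
    (u : ℝ → ℝ → ℝ)
    (hu : ∀ t y, u t y = t ^ (c / a - 2) * Real.exp (-y / (a * t)))
    (y₀ : ℝ) (hy₀ : 0 < y₀) :
    Tendsto (fun t => ∫ z in (0:ℝ)..y₀, u t z) (nhdsWithin 0 (Set.Ioi 0)) atTop := by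
  have key : ∀ t : ℝ, 0 < t →
      (∫ z in (0:ℝ)..y₀, u t z)
        = t ^ (c / a - 1) * (a * (1 - Real.exp (-(y₀ / (a * t))))) := by
    intro t ht
    have hat : 0 < a * t := mul_pos ha ht
    have hk : (-(1 / (a * t))) ≠ 0 := neg_ne_zero.mpr (one_div_ne_zero hat.ne')
    have h1 : ∀ z : ℝ, u t z = t ^ (c / a - 2) * Real.exp ((-(1 / (a * t))) * z) := by
      intro z
      rw [hu]
      ring_nf
    calc (∫ z in (0:ℝ)..y₀, u t z)
        = ∫ z in (0:ℝ)..y₀, t ^ (c / a - 2) * Real.exp ((-(1 / (a * t))) * z) := by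
          simp only [h1]
      _ = t ^ (c / a - 2) * ∫ z in (0:ℝ)..y₀, Real.exp ((-(1 / (a * t))) * z) := by
          rw [intervalIntegral.integral_const_mul]
      _ = t ^ (c / a - 2) * ((-(1 / (a * t)))⁻¹ •
            ∫ z in ((-(1 / (a * t))) * 0)..((-(1 / (a * t))) * y₀), Real.exp z) := by
          rw [intervalIntegral.integral_comp_mul_left Real.exp hk]
      _ = t ^ (c / a - 1) * (a * (1 - Real.exp (-(y₀ / (a * t))))) := by
          rw [integral_exp]
          have ht2 : t ^ (c / a - 2) * t = t ^ (c / a - 1) := by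
            nth_rewrite 2 [show t = t ^ (1:ℝ) from (Real.rpow_one t).symm]
            rw [← Real.rpow_add ht]; ring_nf
          rw [smul_eq_mul]
          rw [show (-(1 / (a * t))) * y₀ = -(y₀ / (a * t)) by ring]
          rw [show (-(1 / (a * t))) * 0 = (0:ℝ) by ring, Real.exp_zero]
          rw [← ht2]
          field_simp
          ring
  have hmain : Tendsto (fun t : ℝ =>
      t ^ (c / a - 1) * (a * (1 - Real.exp (-(y₀ / (a * t))))))
      (nhdsWithin 0 (Set.Ioi 0)) atTop := by
    have hpow : Tendsto (fun t : ℝ => t ^ (c / a - 1)) (nhdsWithin 0 (Set.Ioi 0)) atTop := by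
      have hexp : 0 < 1 - c / a := by
        rw [sub_pos]; exact (div_lt_one ha).mpr hc
      have h1 : Tendsto (fun t : ℝ => (t⁻¹) ^ (1 - c / a)) (nhdsWithin 0 (Set.Ioi 0)) atTop :=
        (tendsto_rpow_atTop hexp).comp tendsto_inv_nhdsGT_zero
      refine h1.congr' ?_
      filter_upwards [self_mem_nhdsWithin] with t ht
      have ht : (0:ℝ) < t := ht
      rw [Real.inv_rpow ht.le, ← Real.rpow_neg ht.le]
      ring_nf
    have hfac : Tendsto (fun t : ℝ => a * (1 - Real.exp (-(y₀ / (a * t)))))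
        (nhdsWithin 0 (Set.Ioi 0)) (nhds a) := by
      have harg : Tendsto (fun t : ℝ => y₀ / (a * t)) (nhdsWithin 0 (Set.Ioi 0)) atTop := by
        have : Tendsto (fun t : ℝ => (y₀ / a) * t⁻¹) (nhdsWithin 0 (Set.Ioi 0)) atTop :=
          (tendsto_inv_nhdsGT_zero).const_mul_atTop (div_pos hy₀ ha)
        refine this.congr fun t => by rw [div_mul_eq_div_div]; ring
      have hexp0 : Tendsto (fun t : ℝ => Real.exp (-(y₀ / (a * t))))
          (nhdsWithin 0 (Set.Ioi 0)) (nhds 0) := by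
        have := Real.tendsto_exp_neg_atTop_nhds_zero.comp harg
        exact this
      have : Tendsto (fun t : ℝ => a * (1 - Real.exp (-(y₀ / (a * t)))))
          (nhdsWithin 0 (Set.Ioi 0)) (nhds (a * (1 - 0))) :=
        (tendsto_const_nhds.sub hexp0).const_mul a
      simpa using this
    exact hpow.atTop_mul_pos ha hfac
  refine hmain.congr' ?_
  filter_upwards [self_mem_nhdsWithin] with t ht
  exact (key t ht).symm
end
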